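/- Let n_T = 2, S₁ = H_R†H_R, S₂ = H_E†H_E, and assume S₁ − S₂ is positive definite. Let λ₀ = λ_max((I + ρS₂)^{-1/2}(I + ρS₁)(I + ρS₂)^{-1/2}), and for a unit vector u₀ ∈ ℂ² satisfying (I + ρS₁)u₀ = λ₀(I + ρS₂)u₀, define S₀ = S₁(I + ρ u₀u₀†S₁)⁻¹ − S₂(I + ρ u₀u₀†S₂)⁻¹ and g = 2 u₀†S₀u₀ − Tr(S₀). Then: (a) every rank-one maximizer of C_s over Ω equals u₀u₀† for some such unit vector u₀; (b) if g < 0 for every such u₀, then every maximizer of C_s over Ω has rank two; equivalently, (c) if u₀u₀† is a maximizer of C_s over Ω, then g ≥ 0 for that u₀. -/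

import Mathlib

open Matrix
open scoped ComplexOrder

/-- The positive semidefinite square root of a positive semidefinite matrix
(removed from Mathlib; restored with its old definition). -/
noncomputable def Matrix.PosSemidef.sqrt {n : Type*} [Fintype n] [DecidableEq n]
    {𝕜 : Type*} [RCLike 𝕜] {A : Matrix n n 𝕜} (hA : A.PosSemidef) : Matrix n n 𝕜 :=
  hA.1.eigenvectorUnitary.1 * diagonal ((↑) ∘ (fun x : ℝ => Real.sqrt x) ∘ hA.1.eigenvalues) *
    (star hA.1.eigenvectorUnitary : Matrix n n 𝕜)

lemma Matrix.PosSemidef.posSemidef_sqrt {n : Type*} [Fintype n] [DecidableEq n]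
    {A : Matrix n n ℂ} (hA : A.PosSemidef) : hA.sqrt.PosSemidef := by
  unfold Matrix.PosSemidef.sqrt
  rw [star_eq_conjTranspose]
  apply Matrix.PosSemidef.mul_mul_conjTranspose_same
  rw [posSemidef_diagonal_iff]
  intro i
  simp only [Function.comp_apply]
  exact Complex.zero_le_real.mpr (Real.sqrt_nonneg _)

lemma Matrix.PosSemidef.sqrt_mul_self {n : Type*} [Fintype n] [DecidableEq n]
    {A : Matrix n n ℂ} (hA : A.PosSemidef) : hA.sqrt * hA.sqrt = A := by
  have hU : star (hA.1.eigenvectorUnitary.1 : Matrix n n ℂ) * hA.1.eigenvectorUnitary.1 = 1 :=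
    (Matrix.mem_unitaryGroup_iff').mp hA.1.eigenvectorUnitary.2
  have hD : diagonal ((RCLike.ofReal : ℝ → ℂ) ∘ (fun x : ℝ => Real.sqrt x) ∘ hA.1.eigenvalues)
      * diagonal ((RCLike.ofReal : ℝ → ℂ) ∘ (fun x : ℝ => Real.sqrt x) ∘ hA.1.eigenvalues)
      = diagonal (RCLike.ofReal ∘ hA.1.eigenvalues : n → ℂ) := by
    rw [diagonal_mul_diagonal]
    congr 1
    funext i
    simp only [Function.comp_apply, ← RCLike.ofReal_mul, Real.mul_self_sqrt (hA.eigenvalues_nonneg i)]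
  unfold Matrix.PosSemidef.sqrt
  conv_rhs => rw [hA.1.spectral_theorem, Unitary.conjStarAlgAut_apply]
  simp only [Matrix.mul_assoc]
  rw [← Matrix.mul_assoc (star (hA.1.eigenvectorUnitary.1 : Matrix n n ℂ)), hU, Matrix.one_mul,
    ← Matrix.mul_assoc (diagonal _) (diagonal _), hD]

/-- The largest eigenvalue of a (Hermitian) complex matrix, expressed as the
supremum of its real eigenvalues. -/
noncomputable def lamMax {n : ℕ} (A : Matrix (Fin n) (Fin n) ℂ) : ℝ :=
  sSup {t : ℝ | ∃ v : Fin n → ℂ, v ≠ 0 ∧ A *ᵥ v = (t : ℂ) • v}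

/-- The secrecy rate `C_s(Q) = log det(I + ρ H_R Q H_R†) − log det(I + ρ H_E Q H_E†)`
for the 2-transmit-antenna wiretap channel. -/
noncomputable def secrecyRate2 {nR nE : ℕ} (HR : Matrix (Fin nR) (Fin 2) ℂ)
    (HE : Matrix (Fin nE) (Fin 2) ℂ) (ρ : ℝ) (Q : Matrix (Fin 2) (Fin 2) ℂ) : ℝ :=
  Real.log ((1 + (ρ : ℂ) • (HR * Q * HRᴴ)).det.re)
    - Real.log ((1 + (ρ : ℂ) • (HE * Q * HEᴴ)).det.re)

/-- `Q` is a global maximizer of the secrecy rate over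
`Ω = {Q ⪰ 0, Tr Q = 1}`. -/
def IsMaximizer2 {nR nE : ℕ} (HR : Matrix (Fin nR) (Fin 2) ℂ)
    (HE : Matrix (Fin nE) (Fin 2) ℂ) (ρ : ℝ) (Q : Matrix (Fin 2) (Fin 2) ℂ) : Prop :=
  Q.PosSemidef ∧ Q.trace = 1 ∧
    ∀ Q' : Matrix (Fin 2) (Fin 2) ℂ, Q'.PosSemidef → Q'.trace = 1 →
      secrecyRate2 HR HE ρ Q' ≤ secrecyRate2 HR HE ρ Q

/-- `S₀ = S₁(I + ρ u₀u₀†S₁)⁻¹ − S₂(I + ρ u₀u₀†S₂)⁻¹` with `S₁ = H_R†H_R`,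
`S₂ = H_E†H_E`. -/
noncomputable def Smat0 {nR nE : ℕ} (HR : Matrix (Fin nR) (Fin 2) ℂ)
    (HE : Matrix (Fin nE) (Fin 2) ℂ) (ρ : ℝ) (u₀ : Fin 2 → ℂ) :
    Matrix (Fin 2) (Fin 2) ℂ :=
  (HRᴴ * HR) * (1 + (ρ : ℂ) • (vecMulVec u₀ (star u₀) * (HRᴴ * HR)))⁻¹
    - (HEᴴ * HE) * (1 + (ρ : ℂ) • (vecMulVec u₀ (star u₀) * (HEᴴ * HE)))⁻¹

/-- `g = 2 u₀†S₀u₀ − Tr(S₀)`. -/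
noncomputable def gval {nR nE : ℕ} (HR : Matrix (Fin nR) (Fin 2) ℂ)
    (HE : Matrix (Fin nE) (Fin 2) ℂ) (ρ : ℝ) (u₀ : Fin 2 → ℂ) : ℝ :=
  2 * (star u₀ ⬝ᵥ (Smat0 HR HE ρ u₀ *ᵥ u₀)).re - (Smat0 HR HE ρ u₀).trace.re


lemma outer_psd {n : Type*} [Fintype n] (v : n → ℂ) : (vecMulVec v (star v)).PosSemidef := by
  rw [vecMulVec_eq (Fin 1)]
  have : replicateRow (Fin 1) (star v) = (replicateCol (Fin 1) v)ᴴ := by ext i j; simp [replicateRow, replicateCol]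
  rw [this]
  exact posSemidef_self_mul_conjTranspose _

lemma trace_outer {n : Type*} [Fintype n] (u v : n → ℂ) : (vecMulVec u v).trace = v ⬝ᵥ u := by
  simp [trace, vecMulVec_apply, dotProduct, mul_comm, diag]

lemma trace_mul_outer {n : Type*} [Fintype n] (A : Matrix n n ℂ) (u v : n → ℂ) :
    (A * vecMulVec u v).trace = v ⬝ᵥ (A *ᵥ u) := by
  simp [trace, mul_apply, vecMulVec_apply, dotProduct, mulVec, diag, Finset.mul_sum]
  apply Finset.sum_congr rfl; intros; apply Finset.sum_congr rfl; intros; ring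

lemma rank_ne_zero_of_trace_one {Q : Matrix (Fin 2) (Fin 2) ℂ} (hQ : Q.PosSemidef)
    (htr : Q.trace = 1) : Q.rank ≠ 0 := by
  intro h0
  have h := hQ.1
  have hcard : Fintype.card {i // h.eigenvalues i ≠ 0} = 0 := by
    rw [← h.rank_eq_card_non_zero_eigs, h0]
  have hall : ∀ i, h.eigenvalues i = 0 := by
    intro i
    by_contra hne
    exact (Fintype.card_eq_zero_iff.mp hcard).false ⟨i, hne⟩
  have hdiag : diagonal (RCLike.ofReal ∘ h.eigenvalues) = (0 : Matrix (Fin 2) (Fin 2) ℂ) := by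
    ext i j
    by_cases hij : i = j <;> simp [diagonal_apply, hij, hall]
  have hQ0 : Q = 0 := by
    rw [h.spectral_theorem, hdiag, map_zero]
  rw [hQ0] at htr
  simp at htr



variable {n : ℕ} {A : Matrix (Fin n) (Fin n) ℂ}

lemma basis_ne_zero (hA : A.IsHermitian) (i : Fin n) : (⇑(hA.eigenvectorBasis i) : Fin n → ℂ) ≠ 0 := by
  intro h
  exact hA.eigenvectorBasis.orthonormal.ne_zero i (by ext j; exact congrFun h j)

lemma mem_eig (hA : A.IsHermitian) {t : ℝ} {v : Fin n → ℂ} (hv : v ≠ 0)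
    (h : A *ᵥ v = (t : ℂ) • v) : ∃ i, t = hA.eigenvalues i := by
  by_contra hc
  push_neg at hc
  apply hv
  -- coefficients
  have key : ∀ i : Fin n, star (⇑(hA.eigenvectorBasis i)) ⬝ᵥ v = 0 := by
    intro i
    have h1 : star (⇑(hA.eigenvectorBasis i)) ⬝ᵥ (A *ᵥ v)
        = (t : ℂ) * (star (⇑(hA.eigenvectorBasis i)) ⬝ᵥ v) := by
      rw [h, dotProduct_smul]; rfl
    have h2 : star (⇑(hA.eigenvectorBasis i)) ⬝ᵥ (A *ᵥ v)
        = (hA.eigenvalues i : ℂ) * (star (⇑(hA.eigenvectorBasis i)) ⬝ᵥ v) := by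
      rw [dotProduct_mulVec]
      have : star (⇑(hA.eigenvectorBasis i)) ᵥ* A = (hA.eigenvalues i : ℂ) • star (⇑(hA.eigenvectorBasis i)) := by
        have h3 := congrArg star (hA.mulVec_eigenvectorBasis i)
        rw [star_mulVec, hA.eq] at h3
        rw [h3]
        ext j
        simp [Pi.smul_apply, Complex.real_smul]
      rw [this, smul_dotProduct]
      rfl
    have h4 : ((hA.eigenvalues i : ℂ) - t) * (star (⇑(hA.eigenvectorBasis i)) ⬝ᵥ v) = 0 := by
      rw [sub_mul, h2.symm.trans h1]; ring
    rcases mul_eq_zero.mp h4 with h5 | h5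
    · have h6 : (hA.eigenvalues i : ℂ) = (t : ℂ) := sub_eq_zero.mp h5
      exact absurd (by exact_mod_cast h6.symm) (hc i)
    · exact h5
  -- injectivity via unitary
  have hU : (star hA.eigenvectorUnitary.1) *ᵥ v = 0 := by
    ext i
    have : ((star hA.eigenvectorUnitary.1) *ᵥ v) i = star (⇑(hA.eigenvectorBasis i)) ⬝ᵥ v := by
      simp [mulVec, dotProduct, star_apply, IsHermitian.eigenvectorUnitary_apply]
    rw [this, key i]; rfl
  have := congrArg (fun w => hA.eigenvectorUnitary.1 *ᵥ w) hU
  simpa [mulVec_mulVec, (Matrix.mem_unitaryGroup_iff).mp hA.eigenvectorUnitary.2, mulVec_zero] using this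

lemma eig_mem (hA : A.IsHermitian) (i : Fin n) :
    hA.eigenvalues i ∈ {t : ℝ | ∃ v : Fin n → ℂ, v ≠ 0 ∧ A *ᵥ v = (t : ℂ) • v} := by
  refine ⟨⇑(hA.eigenvectorBasis i), basis_ne_zero hA i, ?_⟩
  have := hA.mulVec_eigenvectorBasis i
  rw [this]; ext j; simp [Complex.real_smul]

lemma bdd_eig (hA : A.IsHermitian) :
    BddAbove {t : ℝ | ∃ v : Fin n → ℂ, v ≠ 0 ∧ A *ᵥ v = (t : ℂ) • v} := by
  apply Set.Finite.bddAbove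
  apply (Set.finite_range hA.eigenvalues).subset
  rintro t ⟨v, hv, h⟩
  obtain ⟨i, hi⟩ := mem_eig hA hv h
  exact ⟨i, hi.symm⟩

lemma lamMax_ge (hA : A.IsHermitian) (i : Fin n) : hA.eigenvalues i ≤ lamMax A :=
  le_csSup (bdd_eig hA) (eig_mem hA i)

lemma exists_lamMax_eigenvector (hA : A.IsHermitian) (hn : 0 < n) :
    ∃ v : Fin n → ℂ, v ≠ 0 ∧ A *ᵥ v = (lamMax A : ℂ) • v := by
  haveI : Nonempty (Fin n) := ⟨⟨0, hn⟩⟩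
  obtain ⟨i₀, hi₀⟩ := Finite.exists_max hA.eigenvalues
  have hmax : lamMax A = hA.eigenvalues i₀ := by
    apply le_antisymm
    · apply csSup_le ⟨_, eig_mem hA i₀⟩
      rintro t ⟨v, hv, h⟩
      obtain ⟨i, hi⟩ := mem_eig hA hv h
      exact hi ▸ hi₀ i
    · exact lamMax_ge hA i₀
  rw [hmax]
  exact eig_mem hA i₀

lemma lamMax_psd (hA : A.IsHermitian) :
    (((lamMax A : ℂ) • 1 - A)).PosSemidef := by
  have hM : (((lamMax A : ℂ) • 1 - A)).IsHermitian := by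
    apply IsHermitian.sub _ hA
    unfold Matrix.IsHermitian
    rw [conjTranspose_smul]
    simp
  apply (IsHermitian.posSemidef_iff_eigenvalues_nonneg hM).mpr
  intro i
  have hb := hM.mulVec_eigenvectorBasis i
  set w := ⇑(hM.eigenvectorBasis i) with hw
  have hwne : w ≠ 0 := basis_ne_zero hM i
  have hb' : A *ᵥ w = ((lamMax A - hM.eigenvalues i : ℝ) : ℂ) • w := by
    have h1 : ((lamMax A : ℂ) • 1 - A) *ᵥ w = (lamMax A : ℂ) • w - A *ᵥ w := by
      rw [sub_mulVec, smul_mulVec, one_mulVec]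
    have h2 : ((lamMax A : ℂ) • 1 - A) *ᵥ w = hM.eigenvalues i • w := hb
    have : A *ᵥ w = (lamMax A : ℂ) • w - hM.eigenvalues i • w := by
      rw [← h2, h1]; abel
    rw [this]; ext j; simp [Complex.real_smul, Complex.ofReal_sub]; ring
  obtain ⟨j, hj⟩ := mem_eig hA hwne hb'
  have := lamMax_ge hA j
  rw [← hj] at this
  rw [Pi.zero_apply]
  linarith

lemma rayleigh_le (hA : A.IsHermitian) (w : Fin n → ℂ) :
    (star w ⬝ᵥ (A *ᵥ w)).re ≤ lamMax A * (star w ⬝ᵥ w).re := by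
  have h := (lamMax_psd hA).dotProduct_mulVec_nonneg w
  have hval : star w ⬝ᵥ (((lamMax A : ℂ) • 1 - A) *ᵥ w)
      = (lamMax A : ℂ) * (star w ⬝ᵥ w) - star w ⬝ᵥ (A *ᵥ w) := by
    rw [sub_mulVec, dotProduct_sub, smul_mulVec, one_mulVec, dotProduct_smul]
    rfl
  rw [hval] at h
  have := (Complex.nonneg_iff.mp h).1
  simp only [Complex.sub_re, Complex.re_ofReal_mul] at this
  linarith

lemma rayleigh_eq (hA : A.IsHermitian) {w : Fin n → ℂ}
    (h : (star w ⬝ᵥ (A *ᵥ w)).re = lamMax A * (star w ⬝ᵥ w).re) :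
    A *ᵥ w = (lamMax A : ℂ) • w := by
  have hps := lamMax_psd hA
  have hnn := hps.dotProduct_mulVec_nonneg w
  have hval : star w ⬝ᵥ (((lamMax A : ℂ) • 1 - A) *ᵥ w)
      = (lamMax A : ℂ) * (star w ⬝ᵥ w) - star w ⬝ᵥ (A *ᵥ w) := by
    rw [sub_mulVec, dotProduct_sub, smul_mulVec, one_mulVec, dotProduct_smul]
    rfl
  have hzero : star w ⬝ᵥ (((lamMax A : ℂ) • 1 - A) *ᵥ w) = 0 := by
    have h1 := (Complex.nonneg_iff.mp hnn).1
    have h2 := (Complex.nonneg_iff.mp hnn).2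
    apply Complex.ext
    · rw [hval] at h1 ⊢
      simp only [Complex.sub_re, Complex.re_ofReal_mul] at h1 ⊢
      simp [h]
    · rw [← h2]; rfl
  have := hps.dotProduct_mulVec_zero_iff w |>.mp hzero
  rw [sub_mulVec, smul_mulVec, one_mulVec, sub_eq_zero] at this
  exact this.symm

lemma psd_smul {m : Type*} [Fintype m] {M : Matrix m m ℂ} (hM : M.PosSemidef) {r : ℝ}
    (hr : 0 ≤ r) : ((r : ℂ) • M).PosSemidef := by
  refine Matrix.PosSemidef.of_dotProduct_mulVec_nonneg ?_ ?_
  · unfold Matrix.IsHermitian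
    rw [conjTranspose_smul, hM.1]
    norm_num
  · intro x
    rw [smul_mulVec, dotProduct_smul, smul_eq_mul]
    exact mul_nonneg (by exact_mod_cast hr) (hM.dotProduct_mulVec_nonneg x)

lemma dot_star_self_real {m : Type*} [Fintype m] (v : m → ℂ) :
    star v ⬝ᵥ v = ((∑ i, Complex.normSq (v i) : ℝ) : ℂ) := by
  simp [dotProduct, Complex.normSq_eq_conj_mul_self]

lemma dot_star_self_pos {m : Type*} [Fintype m] {v : m → ℂ} (hv : v ≠ 0) :
    0 < ∑ i, Complex.normSq (v i) := by
  have h : ∀ i, 0 ≤ Complex.normSq (v i) := fun i => Complex.normSq_nonneg _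
  rcases Function.ne_iff.mp hv with ⟨i, hi⟩
  have : 0 < Complex.normSq (v i) := by
    simpa [Complex.normSq_pos] using hi
  exact Finset.sum_pos' (fun j _ => h j) ⟨i, Finset.mem_univ i, this⟩


lemma conj_outer {m n : Type*} [Fintype m] [Fintype n] (H : Matrix m n ℂ) (v : n → ℂ) :
    H * vecMulVec v (star v) * Hᴴ = vecMulVec (H *ᵥ v) (star (H *ᵥ v)) := by
  ext i j
  simp [mul_apply, vecMulVec_apply, mulVec, dotProduct, conjTranspose_apply,
    Finset.mul_sum, Finset.sum_mul, star_sum]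
  apply Finset.sum_congr rfl; intros; apply Finset.sum_congr rfl; intros; ring

lemma det_one_add_smul_outer {m : Type*} [Fintype m] [DecidableEq m] (ρ : ℝ) (a : m → ℂ) :
    (1 + (ρ:ℂ) • vecMulVec a (star a)).det = 1 + (ρ:ℂ) * (star a ⬝ᵥ a) := by
  have h1 : (ρ:ℂ) • vecMulVec a (star a) = vecMulVec ((ρ:ℂ) • a) (star a) := by
    ext i j; simp [vecMulVec_apply]; ring
  rw [h1, vecMulVec_eq (Fin 1), det_one_add_replicateCol_mul_replicateRow]
  simp [dotProduct_smul]

lemma dot_gram {m n : Type*} [Fintype m] [Fintype n] (H : Matrix m n ℂ) (v : n → ℂ) :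
    star v ⬝ᵥ ((Hᴴ * H) *ᵥ v) = star (H *ᵥ v) ⬝ᵥ (H *ᵥ v) := by
  rw [← mulVec_mulVec, dotProduct_mulVec, star_mulVec]

lemma det_term {m k : ℕ} (H : Matrix (Fin m) (Fin k) ℂ) (ρ : ℝ) (v : Fin k → ℂ)
    (hv : star v ⬝ᵥ v = 1) :
    (1 + (ρ:ℂ) • (H * vecMulVec v (star v) * Hᴴ)).det
      = star v ⬝ᵥ ((1 + (ρ:ℂ) • (Hᴴ * H)) *ᵥ v) := by
  rw [conj_outer, det_one_add_smul_outer]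
  rw [add_mulVec, one_mulVec, dotProduct_add, smul_mulVec, dotProduct_smul, hv, dot_gram]
  rfl

set_option maxHeartbeats 1000000 in
lemma parta_core {nR nE : ℕ} (HR : Matrix (Fin nR) (Fin 2) ℂ)
    (HE : Matrix (Fin nE) (Fin 2) ℂ) (ρ : ℝ) (hρ : 0 < ρ)
    (hB : ((1 : Matrix (Fin 2) (Fin 2) ℂ) + (ρ : ℂ) • (HEᴴ * HE)).PosSemidef)
    (u : Fin 2 → ℂ) (hu : star u ⬝ᵥ u = 1)
    (hmax : ∀ v : Fin 2 → ℂ, star v ⬝ᵥ v = 1 →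
      secrecyRate2 HR HE ρ (vecMulVec v (star v)) ≤ secrecyRate2 HR HE ρ (vecMulVec u (star u))) :
    ((1 : Matrix (Fin 2) (Fin 2) ℂ) + (ρ : ℂ) • (HRᴴ * HR)) *ᵥ u
      = ((lamMax (hB.sqrt⁻¹ * ((1 : Matrix (Fin 2) (Fin 2) ℂ) + (ρ : ℂ) • (HRᴴ * HR)) * hB.sqrt⁻¹) : ℝ) : ℂ)
        • (((1 : Matrix (Fin 2) (Fin 2) ℂ) + (ρ : ℂ) • (HEᴴ * HE)) *ᵥ u) := by
  classical
  set C : Matrix (Fin 2) (Fin 2) ℂ := 1 + (ρ:ℂ) • (HRᴴ * HR) with hCdef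
  set B : Matrix (Fin 2) (Fin 2) ℂ := 1 + (ρ:ℂ) • (HEᴴ * HE) with hBdef
  have hCpd : C.PosDef :=
    Matrix.PosDef.one.add_posSemidef (psd_smul (posSemidef_conjTranspose_mul_self HR) hρ.le)
  have hBpd : B.PosDef :=
    Matrix.PosDef.one.add_posSemidef (psd_smul (posSemidef_conjTranspose_mul_self HE) hρ.le)
  set R := hB.sqrt with hRdef
  have hRH : Rᴴ = R := hB.posSemidef_sqrt.1
  have hRR : R * R = B := hB.sqrt_mul_self
  have hdetB : B.det ≠ 0 := ne_of_gt hBpd.det_pos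
  have hdetR : R.det ≠ 0 := by
    intro hz
    apply hdetB
    rw [← hRR, det_mul, hz, mul_zero]
  have hRiR : R⁻¹ * R = 1 := nonsing_inv_mul _ (isUnit_iff_ne_zero.mpr hdetR)
  have hRRi : R * R⁻¹ = 1 := mul_nonsing_inv _ (isUnit_iff_ne_zero.mpr hdetR)
  have hRiH : (R⁻¹)ᴴ = R⁻¹ := by rw [conjTranspose_nonsing_inv, hRH]
  set A := R⁻¹ * C * R⁻¹ with hAdef
  have hAH : A.IsHermitian := by
    show Aᴴ = A
    rw [hAdef, conjTranspose_mul, conjTranspose_mul, hRiH, hCpd.isHermitian.eq, ← mul_assoc]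
  have hT0 : ∀ x : Fin 2 → ℂ, R *ᵥ (R⁻¹ *ᵥ x) = x := fun x => by
    rw [mulVec_mulVec, hRRi, one_mulVec]
  have hT1 : ∀ x : Fin 2 → ℂ, A *ᵥ (R *ᵥ x) = R⁻¹ *ᵥ (C *ᵥ x) := fun x => by
    rw [mulVec_mulVec, mulVec_mulVec]
    rw [hAdef, mul_assoc, hRiR, mul_one]
  have hT2 : ∀ x y : Fin 2 → ℂ, star (R *ᵥ x) ⬝ᵥ y = star x ⬝ᵥ (R *ᵥ y) := fun x y => by
    rw [star_mulVec, ← dotProduct_mulVec, hRH]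
  have hFA : ∀ x : Fin 2 → ℂ, star (R *ᵥ x) ⬝ᵥ (A *ᵥ (R *ᵥ x)) = star x ⬝ᵥ (C *ᵥ x) := fun x => by
    rw [hT1, hT2, hT0]
  have hGA : ∀ x : Fin 2 → ℂ, star (R *ᵥ x) ⬝ᵥ (R *ᵥ x) = star x ⬝ᵥ (B *ᵥ x) := fun x => by
    rw [hT2, mulVec_mulVec, hRR]
  -- secrecy rate on unit outer products
  have hsec : ∀ v : Fin 2 → ℂ, star v ⬝ᵥ v = 1 →
      secrecyRate2 HR HE ρ (vecMulVec v (star v))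
        = Real.log ((star v ⬝ᵥ (C *ᵥ v)).re) - Real.log ((star v ⬝ᵥ (B *ᵥ v)).re) := by
    intro v hv
    unfold secrecyRate2
    rw [det_term HR ρ v hv, det_term HE ρ v hv]
  have hunit_ne : ∀ v : Fin 2 → ℂ, star v ⬝ᵥ v = 1 → v ≠ 0 := by
    intro v hv hz
    rw [hz] at hv
    simp at hv
  have hFpos : ∀ v : Fin 2 → ℂ, v ≠ 0 → 0 < (star v ⬝ᵥ (C *ᵥ v)).re := by
    intro v hv
    simpa using hCpd.re_dotProduct_pos hv
  have hGpos : ∀ v : Fin 2 → ℂ, v ≠ 0 → 0 < (star v ⬝ᵥ (B *ᵥ v)).re := by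
    intro v hv
    simpa using hBpd.re_dotProduct_pos hv
  have claim1 : ∀ v : Fin 2 → ℂ, star v ⬝ᵥ v = 1 →
      (star v ⬝ᵥ (C *ᵥ v)).re * (star u ⬝ᵥ (B *ᵥ u)).re
        ≤ (star u ⬝ᵥ (C *ᵥ u)).re * (star v ⬝ᵥ (B *ᵥ v)).re := by
    intro v hv
    have h := hmax v hv
    rw [hsec v hv, hsec u hu] at h
    have hFv := hFpos v (hunit_ne v hv)
    have hFu := hFpos u (hunit_ne u hu)
    have hGv := hGpos v (hunit_ne v hv)
    have hGu := hGpos u (hunit_ne u hu)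
    have h2 : Real.log ((star v ⬝ᵥ (C *ᵥ v)).re * (star u ⬝ᵥ (B *ᵥ u)).re)
        ≤ Real.log ((star u ⬝ᵥ (C *ᵥ u)).re * (star v ⬝ᵥ (B *ᵥ v)).re) := by
      rw [Real.log_mul (ne_of_gt hFv) (ne_of_gt hGu), Real.log_mul (ne_of_gt hFu) (ne_of_gt hGv)]
      linarith
    exact (Real.log_le_log_iff (mul_pos hFv hGu) (mul_pos hFu hGv)).mp h2
  have claim2 : ∀ v : Fin 2 → ℂ, v ≠ 0 →
      (star v ⬝ᵥ (C *ᵥ v)).re * (star u ⬝ᵥ (B *ᵥ u)).re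
        ≤ (star u ⬝ᵥ (C *ᵥ u)).re * (star v ⬝ᵥ (B *ᵥ v)).re := by
    intro v hv
    have hspos := dot_star_self_pos hv
    set s : ℝ := ∑ i, Complex.normSq (v i) with hs
    set r : ℝ := Real.sqrt s with hr
    have hrpos : 0 < r := Real.sqrt_pos.mpr hspos
    have hr2 : r * r = s := Real.mul_self_sqrt hspos.le
    set v' : Fin 2 → ℂ := ((r⁻¹ : ℝ) : ℂ) • v with hv'
    have hv'unit : star v' ⬝ᵥ v' = 1 := by
      rw [hv', star_smul, smul_dotProduct, dotProduct_smul, dot_star_self_real, ← hs]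
      simp only [star_trivial, RCLike.star_def, Complex.conj_ofReal, smul_eq_mul]
      rw [← Complex.ofReal_mul, ← Complex.ofReal_mul]
      norm_cast
      field_simp
      linarith
    have hscale : ∀ M : Matrix (Fin 2) (Fin 2) ℂ,
        (star v' ⬝ᵥ (M *ᵥ v')).re = (r⁻¹ * r⁻¹) * (star v ⬝ᵥ (M *ᵥ v)).re := by
      intro M
      rw [hv', star_smul, smul_dotProduct, mulVec_smul, dotProduct_smul]
      simp only [star_trivial, RCLike.star_def, Complex.conj_ofReal, smul_eq_mul]
      rw [← mul_assoc, ← Complex.ofReal_mul, Complex.re_ofReal_mul]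
    have h := claim1 v' hv'unit
    rw [hscale C, hscale B] at h
    have ha : 0 < r⁻¹ * r⁻¹ := by positivity
    have h2 : (r⁻¹ * r⁻¹) * ((star v ⬝ᵥ (C *ᵥ v)).re * (star u ⬝ᵥ (B *ᵥ u)).re)
        ≤ (r⁻¹ * r⁻¹) * ((star u ⬝ᵥ (C *ᵥ u)).re * (star v ⬝ᵥ (B *ᵥ v)).re) := by
      nlinarith [h]
    exact le_of_mul_le_mul_left h2 ha
  have claim3 : ∀ w : Fin 2 → ℂ, w ≠ 0 →
      (star w ⬝ᵥ (A *ᵥ w)).re * (star u ⬝ᵥ (B *ᵥ u)).re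
        ≤ (star u ⬝ᵥ (C *ᵥ u)).re * (star w ⬝ᵥ w).re := by
    intro w hw
    have hwx : R *ᵥ (R⁻¹ *ᵥ w) = w := hT0 w
    have hxne : (R⁻¹ *ᵥ w) ≠ 0 := by
      intro hz
      apply hw
      rw [← hwx, hz, mulVec_zero]
    have h := claim2 _ hxne
    rw [← hFA (R⁻¹ *ᵥ w), ← hGA (R⁻¹ *ᵥ w), hwx] at h
    exact h
  set lam : ℝ := lamMax A with hlam
  obtain ⟨w₀, hw₀ne, hw₀⟩ := exists_lamMax_eigenvector hAH (by norm_num)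
  have hs₀pos : 0 < (star w₀ ⬝ᵥ w₀).re := by
    rw [dot_star_self_real]
    simpa using dot_star_self_pos hw₀ne
  have hGupos : 0 < (star u ⬝ᵥ (B *ᵥ u)).re := hGpos u (hunit_ne u hu)
  have hle1 : lam * (star u ⬝ᵥ (B *ᵥ u)).re ≤ (star u ⬝ᵥ (C *ᵥ u)).re := by
    have h := claim3 w₀ hw₀ne
    have hAw : (star w₀ ⬝ᵥ (A *ᵥ w₀)).re = lam * (star w₀ ⬝ᵥ w₀).re := by
      rw [hw₀, dotProduct_smul, smul_eq_mul, Complex.re_ofReal_mul]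
    rw [hAw] at h
    have h2 : (lam * (star u ⬝ᵥ (B *ᵥ u)).re) * (star w₀ ⬝ᵥ w₀).re
        ≤ (star u ⬝ᵥ (C *ᵥ u)).re * (star w₀ ⬝ᵥ w₀).re := by nlinarith [h]
    exact le_of_mul_le_mul_right h2 hs₀pos
  have hle2 : (star u ⬝ᵥ (C *ᵥ u)).re ≤ lam * (star u ⬝ᵥ (B *ᵥ u)).re := by
    have h := rayleigh_le hAH (R *ᵥ u)
    rw [hFA u, hGA u] at h
    exact h
  have heq : (star (R *ᵥ u) ⬝ᵥ (A *ᵥ (R *ᵥ u))).re = lam * (star (R *ᵥ u) ⬝ᵥ (R *ᵥ u)).re := by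
    rw [hFA u, hGA u]
    linarith
  have hAeig := rayleigh_eq hAH heq
  have hfin := congrArg (fun y => R *ᵥ y) hAeig
  simp only [mulVec_smul] at hfin
  rw [hT1 u, hT0, mulVec_mulVec, hRR] at hfin
  exact hfin


lemma det_add_smul_two (M N : Matrix (Fin 2) (Fin 2) ℂ) (c : ℂ) :
    (M + c•N).det = M.det + c * (M.trace*N.trace - (M*N).trace) + c^2 * N.det := by
  simp [det_fin_two, trace_fin_two, mul_apply, Fin.sum_univ_two, Matrix.add_apply, Matrix.smul_apply,
    smul_eq_mul]
  ring

lemma trace_adj_two (M N : Matrix (Fin 2) (Fin 2) ℂ) :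
    (adjugate M * N).trace = M.trace*N.trace - (M*N).trace := by
  simp [adjugate_fin_two, trace_fin_two, mul_apply, Fin.sum_univ_two, vecMul,
    dotProduct, vecHead, vecTail]
  ring

lemma outer_mul_outer (u : Fin 2 → ℂ) :
    vecMulVec u (star u) * vecMulVec u (star u) = (star u ⬝ᵥ u) • vecMulVec u (star u) := by
  ext i j
  simp [mul_apply, vecMulVec_apply, dotProduct, Finset.sum_mul, Finset.mul_sum, Matrix.smul_apply,
    smul_eq_mul]
  ring

example (a b c : ℝ) : HasDerivAt (fun t : ℝ => a + t*b + t^2*c) b 0 := by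
  have h1 : HasDerivAt (fun t : ℝ => t*b) b 0 := by simpa using (hasDerivAt_id 0).mul_const b
  have h2 : HasDerivAt (fun t : ℝ => t^2*c) 0 0 := by
    simpa using (hasDerivAt_pow 2 0).mul_const c
  have := ((hasDerivAt_const 0 a).add h1).add h2
  simp only [zero_add, add_zero] at this
  exact this


lemma det_conj_eq {m : ℕ} (H : Matrix (Fin m) (Fin 2) ℂ) (ρ : ℝ)
    (X : Matrix (Fin 2) (Fin 2) ℂ) :
    (1 + (ρ:ℂ) • (H * X * Hᴴ)).det = (1 + (ρ:ℂ) • (X * (Hᴴ * H))).det := by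
  have h1 : (ρ:ℂ) • (H * X * Hᴴ) = ((ρ:ℂ) • (H * X)) * Hᴴ := by
    rw [Matrix.smul_mul]
  rw [h1, det_one_add_mul_comm]
  have h2 : Hᴴ * ((ρ:ℂ) • (H * X)) = ((ρ:ℂ) • (Hᴴ * H)) * X := by
    rw [Matrix.mul_smul, Matrix.smul_mul, ← Matrix.mul_assoc]
  rw [h2, det_one_add_mul_comm, Matrix.mul_smul]

lemma det_pd_pos {m : ℕ} (H : Matrix (Fin m) (Fin 2) ℂ) (ρ : ℝ) (hρ : 0 < ρ)
    {Q : Matrix (Fin 2) (Fin 2) ℂ} (hQ : Q.PosSemidef) :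
    0 < (1 + (ρ:ℂ) • (H * Q * Hᴴ)).det := by
  have hpsd : (H * Q * Hᴴ).PosSemidef := hQ.mul_mul_conjTranspose_same H
  have hpd : ((1 : Matrix (Fin m) (Fin m) ℂ) + (ρ:ℂ) • (H * Q * Hᴴ)).PosDef :=
    Matrix.PosDef.one.add_posSemidef (psd_smul hpsd hρ.le)
  exact hpd.det_pos

lemma deriv_term {m : ℕ} (H : Matrix (Fin m) (Fin 2) ℂ) (ρ : ℝ) (hρ : 0 < ρ)
    (Q D : Matrix (Fin 2) (Fin 2) ℂ) (hQ : Q.PosSemidef) :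
    HasDerivAt (fun t : ℝ => Real.log ((1 + (ρ:ℂ) • (H * (Q + (t:ℂ)•D) * Hᴴ)).det.re))
      (ρ * (((Hᴴ*H) * (1 + (ρ:ℂ) • (Q * (Hᴴ*H)))⁻¹ * D).trace.re)) 0 := by
  set S := Hᴴ * H with hS
  set M : Matrix (Fin 2) (Fin 2) ℂ := 1 + (ρ:ℂ) • (Q * S) with hM
  set N : Matrix (Fin 2) (Fin 2) ℂ := (ρ:ℂ) • (D * S) with hN
  -- function rewrite
  have hfun : (fun t : ℝ => Real.log ((1 + (ρ:ℂ) • (H * (Q + (t:ℂ)•D) * Hᴴ)).det.re))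
      = fun t : ℝ => Real.log ((M + (t:ℂ)•N).det.re) := by
    funext t
    rw [det_conj_eq]
    congr 2
    rw [hM, hN, add_mul, smul_add, smul_mul_assoc, add_assoc]
    congr 1
    rw [smul_comm]
  rw [hfun]
  -- determinant expansion
  set e : ℂ := M.trace * N.trace - (M*N).trace with he
  have hpoly : (fun t : ℝ => (M + (t:ℂ)•N).det.re)
      = fun t : ℝ => M.det.re + t * e.re + t^2 * N.det.re := by
    funext t
    rw [det_add_smul_two]
    rw [Complex.add_re, Complex.add_re, Complex.re_ofReal_mul, ← Complex.ofReal_pow,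
      Complex.re_ofReal_mul]
  -- positivity of det M
  have hdetM : (1 + (ρ:ℂ) • (H * Q * Hᴴ)).det = M.det := det_conj_eq H ρ Q
  have hdetpos := det_pd_pos H ρ hρ hQ
  have hMre : 0 < M.det.re := by
    rw [hdetM] at hdetpos
    exact (Complex.pos_iff.mp hdetpos).1
  have hMim : M.det.im = 0 := by
    rw [hdetM] at hdetpos
    exact ((Complex.pos_iff.mp hdetpos).2).symm
  have hMne : M.det ≠ 0 := by
    intro h
    rw [h] at hMre
    simp at hMre
  -- derivative of inner function
  have hd1 : HasDerivAt (fun t : ℝ => (M + (t:ℂ)•N).det.re) e.re 0 := by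
    rw [hpoly]
    have h1 : HasDerivAt (fun t : ℝ => t * e.re) e.re 0 := by
      simpa using (hasDerivAt_id (0:ℝ)).mul_const e.re
    have h2 : HasDerivAt (fun t : ℝ => t^2 * N.det.re) 0 0 := by
      simpa using (hasDerivAt_pow 2 (0:ℝ)).mul_const N.det.re
    have := ((hasDerivAt_const (0:ℝ) M.det.re).add h1).add h2
    simp only [zero_add, add_zero] at this
    exact this
  have hf0 : (M + ((0:ℝ):ℂ)•N).det.re ≠ 0 := by
    simp only [Complex.ofReal_zero, zero_smul, add_zero]
    exact ne_of_gt hMre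
  have hlog := hd1.log hf0
  -- identify the derivative value
  have hval : e.re / (M + ((0:ℝ):ℂ)•N).det.re = ρ * ((S * M⁻¹ * D).trace.re) := by
    simp only [Complex.ofReal_zero, zero_smul, add_zero]
    have hadj : adjugate M = M.det • M⁻¹ := by
      rw [Matrix.inv_def, Ring.inverse_eq_inv', smul_smul, mul_inv_cancel₀ hMne, one_smul]
    have he2 : e = M.det * (M⁻¹ * N).trace := by
      rw [he, ← trace_adj_two, hadj, smul_mul_assoc, trace_smul, smul_eq_mul]
    have htr : (M⁻¹ * N).trace = (ρ:ℂ) * (S * M⁻¹ * D).trace := by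
      rw [hN, mul_smul_comm, trace_smul, smul_eq_mul]
      congr 1
      rw [← mul_assoc, trace_mul_comm, ← mul_assoc]
    rw [he2, htr]
    rw [Complex.mul_re, hMim]
    simp only [zero_mul, sub_zero]
    rw [Complex.re_ofReal_mul]
    field_simp
  rw [hval] at hlog
  exact hlog








lemma partc_core {nR nE : ℕ} (HR : Matrix (Fin nR) (Fin 2) ℂ)
    (HE : Matrix (Fin nE) (Fin 2) ℂ) (ρ : ℝ) (hρ : 0 < ρ) (u : Fin 2 → ℂ)
    (hu : star u ⬝ᵥ u = 1)
    (hmax : IsMaximizer2 HR HE ρ (vecMulVec u (star u))) : 0 ≤ gval HR HE ρ u := by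
  classical
  set Q : Matrix (Fin 2) (Fin 2) ℂ := vecMulVec u (star u) with hQdef
  have hQpsd : Q.PosSemidef := outer_psd u
  have htrQ : Q.trace = 1 := by rw [hQdef, trace_outer, hu]
  have hQQ : Q * Q = Q := by rw [hQdef, outer_mul_outer, hu, one_smul]
  set D : Matrix (Fin 2) (Fin 2) ℂ := 1 - (2:ℂ) • Q with hDdef
  set P : Matrix (Fin 2) (Fin 2) ℂ := 1 - Q with hPdef
  have hPH : Pᴴ = P := by
    rw [hPdef, conjTranspose_sub, conjTranspose_one, hQpsd.1]
  have hP2 : P * P = P := by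
    rw [hPdef, sub_mul, one_mul, mul_sub, mul_one, hQQ]
    abel
  have hPpsd : P.PosSemidef := by
    have h := posSemidef_conjTranspose_mul_self P
    rwa [hPH, hP2] at h
  have hDtr : D.trace = 0 := by
    rw [hDdef, trace_sub, trace_smul, htrQ, trace_one]
    simp
  -- feasibility
  have hfeas : ∀ t : ℝ, 0 ≤ t → t ≤ 1 →
      (Q + (t:ℂ) • D).PosSemidef ∧ (Q + (t:ℂ) • D).trace = 1 := by
    intro t ht0 ht1
    have hid : Q + (t:ℂ) • D = ((1-t : ℝ):ℂ) • Q + ((t : ℝ):ℂ) • P := by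
      rw [hDdef, hPdef]
      ext i j
      push_cast
      simp only [Matrix.add_apply, Matrix.smul_apply, Matrix.sub_apply, one_apply, smul_eq_mul]
      ring
    refine ⟨?_, ?_⟩
    · rw [hid]
      exact (psd_smul hQpsd (by linarith)).add (psd_smul hPpsd ht0)
    · rw [trace_add, htrQ, trace_smul, hDtr]
      simp
  -- the function and its derivative
  set d : ℝ := ρ * (((HRᴴ*HR) * (1 + (ρ:ℂ) • (Q * (HRᴴ*HR)))⁻¹ * D).trace.re)
      - ρ * (((HEᴴ*HE) * (1 + (ρ:ℂ) • (Q * (HEᴴ*HE)))⁻¹ * D).trace.re) with hd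
  have hf : HasDerivAt (fun t : ℝ => secrecyRate2 HR HE ρ (Q + (t:ℂ) • D)) d 0 :=
    (deriv_term HR ρ hρ Q D hQpsd).sub (deriv_term HE ρ hρ Q D hQpsd)
  -- identify d with -(ρ * gval)
  have hdg : d = -(ρ * gval HR HE ρ u) := by
    have hSD : (Smat0 HR HE ρ u * D).trace
        = ((HRᴴ*HR) * (1 + (ρ:ℂ) • (Q * (HRᴴ*HR)))⁻¹ * D).trace
          - ((HEᴴ*HE) * (1 + (ρ:ℂ) • (Q * (HEᴴ*HE)))⁻¹ * D).trace := by
      rw [Smat0, hQdef, Matrix.sub_mul, trace_sub]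
    have hSD2 : (Smat0 HR HE ρ u * D).trace
        = (Smat0 HR HE ρ u).trace - 2 * (star u ⬝ᵥ (Smat0 HR HE ρ u *ᵥ u)) := by
      rw [hDdef, Matrix.mul_sub, Matrix.mul_one, Matrix.mul_smul, trace_sub, trace_smul,
        hQdef, trace_mul_outer]
      simp [smul_eq_mul]
    have hre := congrArg Complex.re (hSD.symm.trans hSD2)
    rw [Complex.sub_re, Complex.sub_re] at hre
    have h2re : (2 * (star u ⬝ᵥ (Smat0 HR HE ρ u *ᵥ u))).re
        = 2 * (star u ⬝ᵥ (Smat0 HR HE ρ u *ᵥ u)).re := by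
      rw [Complex.mul_re]
      norm_num
    rw [h2re] at hre
    rw [hd, gval]
    linear_combination ρ * hre
  -- local maximality on the right
  have hmono : ∀ t ∈ Set.Ioc (0:ℝ) 1,
      secrecyRate2 HR HE ρ (Q + (t:ℂ) • D) ≤ secrecyRate2 HR HE ρ (Q + ((0:ℝ):ℂ) • D) := by
    intro t ht
    have h0 : Q + ((0:ℝ):ℂ) • D = Q := by simp
    rw [h0]
    exact hmax.2.2 _ (hfeas t ht.1.le ht.2).1 (hfeas t ht.1.le ht.2).2
  -- derivative is ≤ 0
  have hslope : Filter.Tendsto (slope (fun t : ℝ => secrecyRate2 HR HE ρ (Q + (t:ℂ) • D)) 0)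
      (nhdsWithin 0 (Set.Ioi 0)) (nhds d) :=
    (hasDerivAt_iff_tendsto_slope.mp hf).mono_left
      (nhdsWithin_mono 0 (fun x hx => ne_of_gt hx))
  have hdle : d ≤ 0 := by
    apply le_of_tendsto hslope
    have hIoc : Set.Ioc (0:ℝ) 1 ∈ nhdsWithin (0:ℝ) (Set.Ioi 0) := Ioc_mem_nhdsGT_of_mem
      (Set.mem_Ico.mpr ⟨le_refl 0, one_pos⟩)
    filter_upwards [hIoc] with t ht
    have := hmono t ht
    rw [slope_def_field]
    simp only [sub_zero]
    apply div_nonpos_of_nonpos_of_nonneg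
    · have h0 : Q + ((0:ℝ):ℂ) • D = Q := by simp
      rw [h0] at this
      simp only [Complex.ofReal_zero, zero_smul, add_zero]
      linarith [this]
    · exact ht.1.le
  rw [hdg] at hdle
  by_contra hg
  push_neg at hg
  have : ρ * gval HR HE ρ u < 0 := mul_neg_of_pos_of_neg hρ hg
  linarith


lemma basis_unit {n : ℕ} {A : Matrix (Fin n) (Fin n) ℂ} (hA : A.IsHermitian) (i : Fin n) :
    star (⇑(hA.eigenvectorBasis i)) ⬝ᵥ (⇑(hA.eigenvectorBasis i)) = 1 := by
  have h := hA.eigenvectorBasis.orthonormal.1 i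
  have h2 : (inner ℂ (hA.eigenvectorBasis i) (hA.eigenvectorBasis i) : ℂ)
      = star (⇑(hA.eigenvectorBasis i)) ⬝ᵥ (⇑(hA.eigenvectorBasis i)) :=
    by rw [EuclideanSpace.inner_eq_star_dotProduct, dotProduct_comm]
  rw [← h2, inner_self_eq_norm_sq_to_K, h]
  norm_num

lemma rank_one_decomp {Q : Matrix (Fin 2) (Fin 2) ℂ} (hQ : Q.PosSemidef)
    (htr : Q.trace = 1) (hrk : Q.rank = 1) :
    ∃ u : Fin 2 → ℂ, star u ⬝ᵥ u = 1 ∧ Q = vecMulVec u (star u) := by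
  classical
  have h := hQ.1
  have hcard : Fintype.card {i // h.eigenvalues i ≠ 0} = 1 := by
    rw [← h.rank_eq_card_non_zero_eigs, hrk]
  obtain ⟨⟨i₀, hi₀⟩, huniq⟩ := Fintype.card_eq_one_iff.mp hcard
  have hzero : ∀ j, j ≠ i₀ → h.eigenvalues j = 0 := by
    intro j hj
    by_contra hne
    exact hj (congrArg Subtype.val (huniq ⟨j, hne⟩))
  set u : Fin 2 → ℂ := ⇑(h.eigenvectorBasis i₀) with hudef
  have hu1 : star u ⬝ᵥ u = 1 := basis_unit h i₀
  have hkey : (h.eigenvectorUnitary.1 * diagonal (RCLike.ofReal ∘ h.eigenvalues)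
      * (star h.eigenvectorUnitary.1 : Matrix (Fin 2) (Fin 2) ℂ))
      = (h.eigenvalues i₀ : ℂ) • vecMulVec u (star u) := by
    ext i j
    rw [mul_apply]
    rw [Finset.sum_eq_single i₀]
    · rw [mul_diagonal]
      simp only [Function.comp_apply, star_apply, Matrix.smul_apply, vecMulVec_apply,
        Pi.star_apply, smul_eq_mul, IsHermitian.eigenvectorUnitary_apply]
      push_cast
      rw [mul_right_comm]; exact mul_comm _ _
    · intro k _ hk
      rw [mul_diagonal]
      simp only [Function.comp_apply]
      rw [hzero k hk]
      simp
    · intro hmem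
      exact absurd (Finset.mem_univ i₀) hmem
  have hQeq : Q = (h.eigenvalues i₀ : ℂ) • vecMulVec u (star u) :=
    h.spectral_theorem.trans hkey
  have hlam : (h.eigenvalues i₀ : ℂ) = 1 := by
    have h1 : ((h.eigenvalues i₀ : ℂ) • vecMulVec u (star u)).trace
        = (h.eigenvalues i₀ : ℂ) := by
      rw [trace_smul, smul_eq_mul]
      have h2 : (vecMulVec u (star u)).trace = star u ⬝ᵥ u := by
        simp [trace, vecMulVec_apply, dotProduct, diag, mul_comm]
      rw [h2, hu1, mul_one]
    calc (h.eigenvalues i₀ : ℂ) = ((h.eigenvalues i₀ : ℂ) • vecMulVec u (star u)).trace := h1.symm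
      _ = Q.trace := by rw [← hQeq]
      _ = 1 := htr
  refine ⟨u, hu1, ?_⟩
  rw [hQeq, hlam, one_smul]

/-- For `n_T = 2` with `S₁ − S₂ = H_R†H_R − H_E†H_E` positive
definite, let `lam0 = λ_max((I+ρS₂)^{-1/2}(I+ρS₁)(I+ρS₂)^{-1/2})` and call `u₀`
admissible if it is a unit vector with `(I+ρS₁)u₀ = lam0(I+ρS₂)u₀`. Then:
(a) every rank-one maximizer of `C_s` over `Ω` equals `u₀u₀†` for some
admissible `u₀`; (b) if `g(u₀) < 0` for every admissible `u₀`, then every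
maximizer has rank two; (c) if `u₀u₀†` is a maximizer for an admissible `u₀`,
then `g(u₀) ≥ 0`. -/
theorem stmt_15 (nR nE : ℕ) (HR : Matrix (Fin nR) (Fin 2) ℂ)
    (HE : Matrix (Fin nE) (Fin 2) ℂ) (ρ : ℝ) (hρ : 0 < ρ)
    (hpd : (HRᴴ * HR - HEᴴ * HE).PosDef)
    (hB : ((1 : Matrix (Fin 2) (Fin 2) ℂ) + (ρ : ℂ) • (HEᴴ * HE)).PosSemidef)
    (lam0 : ℝ)
    (hlam0 : lam0 = lamMax (hB.sqrt⁻¹ *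
        ((1 : Matrix (Fin 2) (Fin 2) ℂ) + (ρ : ℂ) • (HRᴴ * HR)) * hB.sqrt⁻¹)) :
    (∀ Q : Matrix (Fin 2) (Fin 2) ℂ, IsMaximizer2 HR HE ρ Q → Q.rank = 1 →
      ∃ u₀ : Fin 2 → ℂ, star u₀ ⬝ᵥ u₀ = 1 ∧
        ((1 : Matrix (Fin 2) (Fin 2) ℂ) + (ρ : ℂ) • (HRᴴ * HR)) *ᵥ u₀
          = (lam0 : ℂ) • (((1 : Matrix (Fin 2) (Fin 2) ℂ) + (ρ : ℂ) • (HEᴴ * HE)) *ᵥ u₀) ∧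
        Q = vecMulVec u₀ (star u₀)) ∧
    ((∀ u₀ : Fin 2 → ℂ, star u₀ ⬝ᵥ u₀ = 1 →
        ((1 : Matrix (Fin 2) (Fin 2) ℂ) + (ρ : ℂ) • (HRᴴ * HR)) *ᵥ u₀
          = (lam0 : ℂ) • (((1 : Matrix (Fin 2) (Fin 2) ℂ) + (ρ : ℂ) • (HEᴴ * HE)) *ᵥ u₀) →
        gval HR HE ρ u₀ < 0) →
      ∀ Q : Matrix (Fin 2) (Fin 2) ℂ, IsMaximizer2 HR HE ρ Q → Q.rank = 2) ∧
    (∀ u₀ : Fin 2 → ℂ, star u₀ ⬝ᵥ u₀ = 1 →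
      ((1 : Matrix (Fin 2) (Fin 2) ℂ) + (ρ : ℂ) • (HRᴴ * HR)) *ᵥ u₀
        = (lam0 : ℂ) • (((1 : Matrix (Fin 2) (Fin 2) ℂ) + (ρ : ℂ) • (HEᴴ * HE)) *ᵥ u₀) →
      IsMaximizer2 HR HE ρ (vecMulVec u₀ (star u₀)) →
      0 ≤ gval HR HE ρ u₀) := by
  have key_a : ∀ Q : Matrix (Fin 2) (Fin 2) ℂ, IsMaximizer2 HR HE ρ Q → Q.rank = 1 →
      ∃ u₀ : Fin 2 → ℂ, star u₀ ⬝ᵥ u₀ = 1 ∧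
        ((1 : Matrix (Fin 2) (Fin 2) ℂ) + (ρ : ℂ) • (HRᴴ * HR)) *ᵥ u₀
          = (lam0 : ℂ) • (((1 : Matrix (Fin 2) (Fin 2) ℂ) + (ρ : ℂ) • (HEᴴ * HE)) *ᵥ u₀) ∧
        Q = vecMulVec u₀ (star u₀) := by
    intro Q hmax hrk
    obtain ⟨u, hu, hQ⟩ := rank_one_decomp hmax.1 hmax.2.1 hrk
    refine ⟨u, hu, ?_, hQ⟩
    rw [hlam0]
    apply parta_core HR HE ρ hρ hB u hu
    intro v hv
    rw [← hQ]
    exact hmax.2.2 _ (outer_psd v) (by rw [trace_outer, hv])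
  have key_c : ∀ u₀ : Fin 2 → ℂ, star u₀ ⬝ᵥ u₀ = 1 →
      IsMaximizer2 HR HE ρ (vecMulVec u₀ (star u₀)) → 0 ≤ gval HR HE ρ u₀ := by
    intro u hu hmax
    exact partc_core HR HE ρ hρ u hu hmax
  refine ⟨key_a, ?_, fun u hu _ hmax => key_c u hu hmax⟩
  intro hall Q hmax
  have hle : Q.rank ≤ 2 := by simpa using Q.rank_le_card_width
  have hne0 : Q.rank ≠ 0 := rank_ne_zero_of_trace_one hmax.1 hmax.2.1
  have hne1 : Q.rank ≠ 1 := by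
    intro h1
    obtain ⟨u, hu, hadm, hQ⟩ := key_a Q hmax h1
    have hg := hall u hu hadm
    have hge := key_c u hu (hQ ▸ hmax)
    linarith
  omega
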